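/- arXiv:1008.2309 — 2 statements merged into one kernel-verified Lean document; each statement's English description precedes it below -/
import Mathlib

section
/- Let $x, y_1, \dots, y_N$ be pairwise commuting elements of a (unital, associative) algebra over the rationals (or assume the algebra is a commutative $\mathbb{Q}$-algebra). Then $\sum_{n_0, \dots, n_N \geq 0} \frac{x^{n_0} (x+y_1)^{n_1} \cdots (x+y_N)^{n_N}}{(n_0 + \cdots + n_N + N)!} = e^x \sum_{n_1, \dots, n_N \geq 0} \frac{y_1^{n_1} \cdots y_N^{n_N}}{\left( \sum_{i=1}^N (n_i+1) \right)!}$, where all sums converge (e.g. interpret the identity as an identity of formal power series in $x, y_1, \dots, y_N$, or for real/complex numbers). -/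
set_option maxHeartbeats 1000000


open scoped BigOperators

open scoped Nat

open Finset

private lemma sigma_subtype_eq {α β : Type*} (s : α → Finset β) {a a' : α} (h : a' = a)
    (k : β) (h1 : k ∈ s a') (h2 : k ∈ s a) :
    (⟨a', ⟨k, h1⟩⟩ : Σ a, {k // k ∈ s a}) = ⟨a, ⟨k, h2⟩⟩ := by subst h; rfl

private lemma summable_pi_prod : ∀ (M : ℕ) {κ : Type} (g : Fin M → κ → ℝ),
    (∀ i x, 0 ≤ g i x) → (∀ i, Summable (g i)) →
    Summable fun n : Fin M → κ => ∏ i, g i (n i) := by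
  intro M
  induction M with
  | zero =>
    intro κ g _ _
    have h : (fun n : Fin 0 → κ => ∏ i, g i (n i)) = fun _ => (1 : ℝ) := by
      funext n; simp
    rw [h]
    exact Summable.of_finite
  | succ M ih =>
    intro κ g h0 hs
    refine ((Fin.consEquiv fun _ : Fin (M + 1) => κ).summable_iff).mp ?_
    have h : ((fun n : Fin (M + 1) → κ => ∏ i, g i (n i)) ∘
        (Fin.consEquiv fun _ : Fin (M + 1) => κ)) =
        fun p : κ × (Fin M → κ) => g 0 p.1 * ∏ i : Fin M, g i.succ (p.2 i) := by
      funext p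
      simp [Fin.consEquiv, Fin.prod_univ_succ]
    rw [h]
    have h1 : (0 : κ → ℝ) ≤ g 0 := Pi.le_def.mpr fun x => h0 0 x
    have h2 : (0 : (Fin M → κ) → ℝ) ≤ fun n => ∏ i, g i.succ (n i) :=
      Pi.le_def.mpr fun p => Finset.prod_nonneg fun i _ => h0 _ _
    have hres := Summable.mul_of_nonneg (hs 0)
      (ih (fun i => g i.succ) (fun i x => h0 i.succ x) fun i => hs i.succ) h1 h2
    exact hres

private lemma summable_norm_term (N : ℕ) (z : Fin (N + 1) → ℂ) :
    Summable fun n : Fin (N + 1) → ℕ =>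
      ‖(∏ i, z i ^ n i) / ((Nat.factorial ((∑ i, n i) + N)) : ℂ)‖ := by
  have hG : Summable fun n : Fin (N + 1) → ℕ => ∏ i, (‖z i‖ ^ n i / (n i)! : ℝ) :=
    summable_pi_prod _ (fun i a => ‖z i‖ ^ a / a !)
      (fun i a => by positivity) fun i => Real.summable_pow_div_factorial _
  refine hG.of_nonneg_of_le (fun _ => norm_nonneg _) fun n => ?_
  have h1 : (∏ i, (n i)!) ≤ ((∑ i, n i) + N)! :=
    Nat.le_of_dvd (Nat.factorial_pos _)
      ((Nat.prod_factorial_dvd_factorial_sum _ _).trans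
        (Nat.factorial_dvd_factorial (Nat.le_add_right _ _)))
  calc ‖(∏ i, z i ^ n i) / ((Nat.factorial ((∑ i, n i) + N)) : ℂ)‖
      = (∏ i, ‖z i‖ ^ n i) / ((Nat.factorial ((∑ i, n i) + N)) : ℝ) := by
        rw [norm_div, norm_prod]
        simp [RCLike.norm_natCast]
    _ ≤ (∏ i, ‖z i‖ ^ n i) / (∏ i, ((n i)! : ℝ)) := by
        gcongr
        exact_mod_cast h1
    _ = ∏ i, (‖z i‖ ^ n i / (n i)!) := by rw [Finset.prod_div_distrib]

private noncomputable def Hf (N : ℕ) (c : ℂ) (z : Fin (N + 1) → ℂ)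
    (p : (Fin (N + 1) → ℕ) × (Fin (N + 1) → ℕ)) : ℂ :=
  (∏ i, (((p.1 i + p.2 i).choose (p.1 i) : ℕ) : ℂ) * c ^ p.1 i * z i ^ p.2 i) /
    ((Nat.factorial ((∑ i, (p.1 i + p.2 i)) + N)) : ℂ)

private lemma summable_norm_Hf (N : ℕ) (c : ℂ) (z : Fin (N + 1) → ℂ) :
    Summable fun p => ‖Hf N c z p‖ := by
  have hG : Summable fun q : Fin (N + 1) → ℕ × ℕ =>
      ∏ i, (‖c‖ ^ (q i).1 / ((q i).1)! * (‖z i‖ ^ (q i).2 / ((q i).2)!)) := by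
    have hone : ∀ i : Fin (N + 1),
        Summable fun x : ℕ × ℕ => ‖c‖ ^ x.1 / (x.1)! * (‖z i‖ ^ x.2 / (x.2)!) := by
      intro i
      have h1 : (0 : ℕ → ℝ) ≤ fun a => ‖c‖ ^ a / a ! := Pi.le_def.mpr fun a => by positivity
      have h2 : (0 : ℕ → ℝ) ≤ fun a => ‖z i‖ ^ a / a ! := Pi.le_def.mpr fun a => by positivity
      have := Summable.mul_of_nonneg (Real.summable_pow_div_factorial ‖c‖)
        (Real.summable_pow_div_factorial ‖z i‖) h1 h2
      exact this
    have := summable_pi_prod (N + 1)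
      (fun (i : Fin (N + 1)) (x : ℕ × ℕ) => ‖c‖ ^ x.1 / (x.1)! * (‖z i‖ ^ x.2 / (x.2)!))
      (fun i x => by positivity) hone
    exact this
  have hG' : Summable fun p : (Fin (N + 1) → ℕ) × (Fin (N + 1) → ℕ) =>
      ∏ i, (‖c‖ ^ p.1 i / (p.1 i)! * (‖z i‖ ^ p.2 i / (p.2 i)!)) := by
    refine ((Equiv.arrowProdEquivProdArrow (Fin (N + 1)) (fun _ => ℕ) (fun _ => ℕ)).summable_iff).mp ?_
    have h : ((fun p : (Fin (N + 1) → ℕ) × (Fin (N + 1) → ℕ) =>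
        ∏ i, (‖c‖ ^ p.1 i / (p.1 i)! * (‖z i‖ ^ p.2 i / (p.2 i)!))) ∘
        (Equiv.arrowProdEquivProdArrow (Fin (N + 1)) (fun _ => ℕ) (fun _ => ℕ))) =
        fun q : Fin (N + 1) → ℕ × ℕ =>
          ∏ i, (‖c‖ ^ (q i).1 / ((q i).1)! * (‖z i‖ ^ (q i).2 / ((q i).2)!)) := by
      funext q
      simp [Equiv.arrowProdEquivProdArrow]
    rw [h]
    exact hG
  refine hG'.of_nonneg_of_le (fun _ => norm_nonneg _) fun p => ?_
  have h1 : (∏ i, (p.1 i + p.2 i)!) ≤ ((∑ i, (p.1 i + p.2 i)) + N)! :=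
    Nat.le_of_dvd (Nat.factorial_pos _)
      ((Nat.prod_factorial_dvd_factorial_sum _ _).trans
        (Nat.factorial_dvd_factorial (Nat.le_add_right _ _)))
  calc ‖Hf N c z p‖
      = (∏ i, (((p.1 i + p.2 i).choose (p.1 i) : ℕ) : ℝ) * ‖c‖ ^ p.1 i * ‖z i‖ ^ p.2 i) /
          ((Nat.factorial ((∑ i, (p.1 i + p.2 i)) + N)) : ℝ) := by
        rw [Hf, norm_div, norm_prod]
        simp [RCLike.norm_natCast]
    _ ≤ (∏ i, (((p.1 i + p.2 i).choose (p.1 i) : ℕ) : ℝ) * ‖c‖ ^ p.1 i * ‖z i‖ ^ p.2 i) /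
          (∏ i, (((p.1 i + p.2 i)! : ℕ) : ℝ)) := by
        gcongr
        exact_mod_cast h1
    _ = ∏ i, ((((p.1 i + p.2 i).choose (p.1 i) : ℕ) : ℝ) * ‖c‖ ^ p.1 i * ‖z i‖ ^ p.2 i /
          (((p.1 i + p.2 i)! : ℕ) : ℝ)) := by rw [Finset.prod_div_distrib]
    _ = ∏ i, (‖c‖ ^ p.1 i / (p.1 i)! * (‖z i‖ ^ p.2 i / (p.2 i)!)) := by
        refine Finset.prod_congr rfl fun i _ => ?_
        have h := Nat.add_choose_mul_factorial_mul_factorial (p.1 i) (p.2 i)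
        have h' : (((p.1 i + p.2 i).choose (p.1 i) : ℕ) : ℝ) * ((p.1 i)! : ℝ) * ((p.2 i)! : ℝ)
            = (((p.1 i + p.2 i)! : ℕ) : ℝ) := by
          rw [Nat.choose_symm_add]
          exact_mod_cast congrArg (Nat.cast : ℕ → ℝ) h
        have hk : ((p.1 i)! : ℝ) ≠ 0 := by positivity
        have hm : ((p.2 i)! : ℝ) ≠ 0 := by positivity
        have hkm : (((p.1 i + p.2 i)! : ℕ) : ℝ) ≠ 0 := by positivity
        field_simp
        linear_combination (‖c‖ ^ p.1 i * ‖z i‖ ^ p.2 i) * h'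

private lemma vander (M : ℕ) (m : Fin (M + 1) → ℕ) (K : ℕ) :
    ∑ k ∈ Finset.Nat.antidiagonalTuple (M + 1) K, ∏ i, (k i + m i).choose (k i)
      = (K + ((∑ i, m i) + M)).choose K := by
  classical
  have h1 : ∏ i : Fin (M + 1), (PowerSeries.mk fun n => ((m i + n).choose (m i) : ℤ))
      = PowerSeries.mk fun n => ((((∑ i, m i) + M) + n).choose ((∑ i, m i) + M) : ℤ) := by
    calc ∏ i : Fin (M + 1), (PowerSeries.mk fun n => ((m i + n).choose (m i) : ℤ))
        = ∏ i : Fin (M + 1), (PowerSeries.mk 1 : PowerSeries ℤ) ^ (m i + 1) :=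
          Finset.prod_congr rfl fun i _ =>
            (PowerSeries.mk_one_pow_eq_mk_choose_add ℤ (m i)).symm
      _ = (PowerSeries.mk 1 : PowerSeries ℤ) ^ (∑ i, (m i + 1)) :=
          Finset.prod_pow_eq_pow_sum _ _ _
      _ = (PowerSeries.mk 1 : PowerSeries ℤ) ^ (((∑ i, m i) + M) + 1) := by
          congr 1
          rw [Finset.sum_add_distrib]
          simp only [Finset.sum_const, Finset.card_univ, Fintype.card_fin, smul_eq_mul, mul_one]
          omega
      _ = PowerSeries.mk fun n => ((((∑ i, m i) + M) + n).choose ((∑ i, m i) + M) : ℤ) :=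
          PowerSeries.mk_one_pow_eq_mk_choose_add ℤ _
  have h3 := congrArg (PowerSeries.coeff (R := ℤ) K) h1
  rw [PowerSeries.coeff_prod] at h3
  simp only [PowerSeries.coeff_mk] at h3
  have h4 : ∑ l ∈ Finset.finsuppAntidiag (univ : Finset (Fin (M + 1))) K,
      ∏ i, ((m i + l i).choose (m i))
      = ∑ k ∈ Finset.Nat.antidiagonalTuple (M + 1) K, ∏ i, (k i + m i).choose (k i) := by
    refine Finset.sum_nbij' (fun l => (l : Fin (M + 1) → ℕ))
      (fun k => Finsupp.equivFunOnFinite.symm k) ?_ ?_ ?_ ?_ ?_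
    · intro l hl
      rw [Finset.mem_finsuppAntidiag] at hl
      exact Finset.Nat.mem_antidiagonalTuple.mpr hl.1
    · intro k hk
      rw [Finset.mem_finsuppAntidiag]
      refine ⟨?_, Finset.subset_univ _⟩
      have hsum := Finset.Nat.mem_antidiagonalTuple.mp hk
      simpa using hsum
    · intro l _; exact Finsupp.equivFunOnFinite.symm_apply_apply l
    · intro k _; rfl
    · intro l _
      refine Finset.prod_congr rfl fun i _ => ?_
      rw [add_comm (m i) (l i), Nat.choose_symm_add]
  have h5 : ∑ l ∈ Finset.finsuppAntidiag (univ : Finset (Fin (M + 1))) K,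
      ∏ i, ((m i + l i).choose (m i)) = (((∑ i, m i) + M) + K).choose ((∑ i, m i) + M) := by
    exact_mod_cast h3
  rw [← h4, h5, Nat.choose_symm_add, add_comm]

private def eqv1 (N : ℕ) : (Σ n : Fin (N + 1) → ℕ,
    {k // k ∈ Fintype.piFinset fun i => Finset.range (n i + 1)}) ≃
    ((Fin (N + 1) → ℕ) × (Fin (N + 1) → ℕ)) where
  toFun q := (q.2.1, q.1 - q.2.1)
  invFun p := ⟨p.1 + p.2, ⟨p.1, by
    rw [Fintype.mem_piFinset]
    intro i
    rw [Finset.mem_range, Pi.add_apply]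
    omega⟩⟩
  left_inv q := by
    obtain ⟨n, ⟨k, hk⟩⟩ := q
    have hle : ∀ i, k i ≤ n i := fun i =>
      Nat.lt_succ_iff.mp (Finset.mem_range.mp (Fintype.mem_piFinset.mp hk i))
    exact sigma_subtype_eq
      (fun n : Fin (N + 1) → ℕ => Fintype.piFinset fun i => Finset.range (n i + 1))
      (funext fun i => by
        have := hle i
        simp only [Pi.add_apply, Pi.sub_apply]
        omega) _ _ _
  right_inv p := by
    refine Prod.ext rfl (funext fun i => ?_)
    simp only [Pi.sub_apply, Pi.add_apply]
    omega

private def eqv2 (N : ℕ) : (Σ q : ℕ × (Fin (N + 1) → ℕ),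
    {k // k ∈ Finset.Nat.antidiagonalTuple (N + 1) q.1}) ≃
    ((Fin (N + 1) → ℕ) × (Fin (N + 1) → ℕ)) where
  toFun σ := (σ.2.1, σ.1.2)
  invFun p := ⟨((∑ i, p.1 i), p.2), ⟨p.1, Finset.Nat.mem_antidiagonalTuple.mpr rfl⟩⟩
  left_inv σ := by
    obtain ⟨⟨K, m'⟩, ⟨k, hk⟩⟩ := σ
    exact sigma_subtype_eq (fun q : ℕ × (Fin (N + 1) → ℕ) =>
      Finset.Nat.antidiagonalTuple (N + 1) q.1)
      (by rw [Finset.Nat.mem_antidiagonalTuple.mp hk]) _ _ _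
  right_inv p := rfl

private lemma key (N : ℕ) (c : ℂ) (z : Fin (N + 1) → ℂ) :
    (∑' n : Fin (N + 1) → ℕ,
        (∏ i, (c + z i) ^ n i) / ((Nat.factorial ((∑ i, n i) + N)) : ℂ)) =
      Complex.exp c *
        ∑' n : Fin (N + 1) → ℕ,
          (∏ i, z i ^ n i) / ((Nat.factorial ((∑ i, n i) + N)) : ℂ) := by
  classical
  have hH : Summable (Hf N c z) := (summable_norm_Hf N c z).of_norm
  have step1 : ∑' p, Hf N c z p =
      ∑' n : Fin (N + 1) → ℕ,
        (∏ i, (c + z i) ^ n i) / ((Nat.factorial ((∑ i, n i) + N)) : ℂ) := by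
    have hsig : Summable fun σ => Hf N c z (eqv1 N σ) :=
      (eqv1 N).summable_iff.mpr hH
    calc ∑' p, Hf N c z p
        = ∑' σ, Hf N c z (eqv1 N σ) := ((eqv1 N).tsum_eq (Hf N c z)).symm
      _ = ∑' (n : Fin (N + 1) → ℕ)
            (kk : {k // k ∈ Fintype.piFinset fun i => Finset.range (n i + 1)}),
            Hf N c z (eqv1 N ⟨n, kk⟩) := Summable.tsum_sigma hsig
      _ = ∑' n : Fin (N + 1) → ℕ,
            (∏ i, (c + z i) ^ n i) / ((Nat.factorial ((∑ i, n i) + N)) : ℂ) := by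
          refine tsum_congr fun n => ?_
          have hfin : ∑' kk : {k // k ∈ Fintype.piFinset fun i => Finset.range (n i + 1)},
              Hf N c z (kk.1, n - kk.1)
              = ∑ k ∈ Fintype.piFinset (fun i => Finset.range (n i + 1)),
                Hf N c z (k, n - k) :=
            Finset.tsum_subtype _ fun k => Hf N c z (k, n - k)
          have heq : (∑' kk : {k // k ∈ Fintype.piFinset fun i => Finset.range (n i + 1)},
              Hf N c z (eqv1 N ⟨n, kk⟩))
              = ∑' kk : {k // k ∈ Fintype.piFinset fun i => Finset.range (n i + 1)},
                Hf N c z (kk.1, n - kk.1) := rfl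
          rw [heq, hfin]
          have h1 : ∀ k ∈ Fintype.piFinset (fun i => Finset.range (n i + 1)),
              Hf N c z (k, n - k) =
                (∏ i, (((n i).choose (k i) : ℕ) : ℂ) * c ^ k i * z i ^ (n i - k i)) /
                  ((Nat.factorial ((∑ i, n i) + N)) : ℂ) := by
            intro k hk
            have hle : ∀ i, k i ≤ n i := fun i =>
              Nat.lt_succ_iff.mp (Finset.mem_range.mp (Fintype.mem_piFinset.mp hk i))
            have h2 : ∀ i, k i + (n i - k i) = n i := fun i => by
              have := hle i; omega
            unfold Hf
            simp only [Pi.sub_apply]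
            simp only [h2]
          rw [Finset.sum_congr rfl h1, ← Finset.sum_div,
            ← Finset.prod_univ_sum (fun i => Finset.range (n i + 1))
              (fun i j => (((n i).choose j : ℕ) : ℂ) * c ^ j * z i ^ (n i - j))]
          congr 1
          refine Finset.prod_congr rfl fun i _ => ?_
          rw [add_pow]
          exact Finset.sum_congr rfl fun j hj => by ring
  have hinner2 : ∀ (K : ℕ) (m' : Fin (N + 1) → ℕ),
      ∑ k ∈ Finset.Nat.antidiagonalTuple (N + 1) K, Hf N c z (k, m')
        = c ^ K / (K ! : ℂ) *
          ((∏ i, z i ^ m' i) / ((Nat.factorial ((∑ i, m' i) + N)) : ℂ)) := by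
    intro K m'
    have h1 : ∀ k ∈ Finset.Nat.antidiagonalTuple (N + 1) K,
        Hf N c z (k, m') =
          (∏ i, (((k i + m' i).choose (k i) : ℕ) : ℂ)) * c ^ K * (∏ i, z i ^ m' i) /
            ((Nat.factorial (K + ((∑ i, m' i) + N))) : ℂ) := by
      intro k hk
      have hsum : ∑ i, k i = K := Finset.Nat.mem_antidiagonalTuple.mp hk
      have hd : (∑ i, (k i + m' i)) + N = K + ((∑ i, m' i) + N) := by
        rw [Finset.sum_add_distrib, hsum]; omega
      unfold Hf
      rw [hd, Finset.prod_mul_distrib, Finset.prod_mul_distrib,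
        Finset.prod_pow_eq_pow_sum, hsum]
    rw [Finset.sum_congr rfl h1]
    rw [← Finset.sum_div, ← Finset.sum_mul, ← Finset.sum_mul]
    have hv : (∑ k ∈ Finset.Nat.antidiagonalTuple (N + 1) K,
        ∏ i, (((k i + m' i).choose (k i) : ℕ) : ℂ))
        = (((K + ((∑ i, m' i) + N)).choose K : ℕ) : ℂ) := by
      exact_mod_cast congrArg (Nat.cast : ℕ → ℂ) (vander N m' K)
    rw [hv]
    have hfact := Nat.choose_mul_factorial_mul_factorial
      (Nat.le_add_right K ((∑ i, m' i) + N))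
    have hfact' : (((K + ((∑ i, m' i) + N)).choose K : ℕ) : ℂ) * (K ! : ℂ) *
        ((((∑ i, m' i) + N)! : ℕ) : ℂ) = (((K + ((∑ i, m' i) + N))! : ℕ) : ℂ) := by
      rw [show K + ((∑ i, m' i) + N) - K = (∑ i, m' i) + N from by omega] at hfact
      exact_mod_cast congrArg (Nat.cast : ℕ → ℂ) hfact
    have hK : (K ! : ℂ) ≠ 0 := Nat.cast_ne_zero.mpr (Nat.factorial_ne_zero K)
    have hS : ((((∑ i, m' i) + N)! : ℕ) : ℂ) ≠ 0 :=
      Nat.cast_ne_zero.mpr (Nat.factorial_ne_zero _)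
    have hKS : (((K + ((∑ i, m' i) + N))! : ℕ) : ℂ) ≠ 0 :=
      Nat.cast_ne_zero.mpr (Nat.factorial_ne_zero _)
    field_simp
    linear_combination (c ^ K * ∏ i, z i ^ m' i) * hfact'
  have step2 : ∑' p, Hf N c z p =
      ∑' q : ℕ × (Fin (N + 1) → ℕ),
        (c ^ q.1 / (q.1 ! : ℂ) *
          ((∏ i, z i ^ q.2 i) / ((Nat.factorial ((∑ i, q.2 i) + N)) : ℂ))) := by
    have hsig : Summable fun σ => Hf N c z (eqv2 N σ) :=
      (eqv2 N).summable_iff.mpr hH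
    calc ∑' p, Hf N c z p
        = ∑' σ, Hf N c z (eqv2 N σ) := ((eqv2 N).tsum_eq (Hf N c z)).symm
      _ = ∑' (q : ℕ × (Fin (N + 1) → ℕ))
            (kk : {k // k ∈ Finset.Nat.antidiagonalTuple (N + 1) q.1}),
            Hf N c z (eqv2 N ⟨q, kk⟩) := Summable.tsum_sigma hsig
      _ = ∑' q : ℕ × (Fin (N + 1) → ℕ),
            (c ^ q.1 / (q.1 ! : ℂ) *
              ((∏ i, z i ^ q.2 i) / ((Nat.factorial ((∑ i, q.2 i) + N)) : ℂ))) := by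
          refine tsum_congr fun q => ?_
          have hfin : ∑' kk : {k // k ∈ Finset.Nat.antidiagonalTuple (N + 1) q.1},
              Hf N c z (kk.1, q.2)
              = ∑ k ∈ Finset.Nat.antidiagonalTuple (N + 1) q.1, Hf N c z (k, q.2) :=
            Finset.tsum_subtype _ fun k => Hf N c z (k, q.2)
          have heq : (∑' kk : {k // k ∈ Finset.Nat.antidiagonalTuple (N + 1) q.1},
              Hf N c z (eqv2 N ⟨q, kk⟩))
              = ∑' kk : {k // k ∈ Finset.Nat.antidiagonalTuple (N + 1) q.1},
                Hf N c z (kk.1, q.2) := rfl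
          rw [heq, hfin]
          exact hinner2 q.1 q.2
  have hexp : Summable fun K : ℕ => ‖c ^ K / (K ! : ℂ)‖ := by
    refine (Real.summable_pow_div_factorial ‖c‖).congr fun K => ?_
    rw [norm_div, norm_pow, RCLike.norm_natCast]
  have hmul := tsum_mul_tsum_of_summable_norm hexp (summable_norm_term N z)
  have hexpeq : (∑' K : ℕ, c ^ K / (K ! : ℂ)) = Complex.exp c := by
    rw [Complex.exp_eq_exp_ℂ, NormedSpace.exp_eq_tsum_div]
  rw [← step1, step2, ← hexpeq]
  exact hmul.symm

/-- Lemma 1 of the paper, stated for complex numbers: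
`∑_{n_0,…,n_N} x^{n_0}(x+y_1)^{n_1}⋯(x+y_N)^{n_N}/(n_0+⋯+n_N+N)!
  = e^x ∑_{n_1,…,n_N} y_1^{n_1}⋯y_N^{n_N}/((n_1+1)+⋯+(n_N+1))!`. -/
theorem stmt0 (N : ℕ) (x : ℂ) (y : Fin N → ℂ) :
    (∑' n : Fin (N + 1) → ℕ,
        (x ^ n 0 * ∏ i : Fin N, (x + y i) ^ n i.succ) /
          (Nat.factorial ((∑ i, n i) + N) : ℂ)) =
      Complex.exp x *
        ∑' m : Fin N → ℕ,
          (∏ i : Fin N, y i ^ m i) / (Nat.factorial (∑ i, (m i + 1)) : ℂ) := by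
  classical
  have hkey := key N x (Fin.cons (0 : ℂ) y)
  have hL : (∑' n : Fin (N + 1) → ℕ,
      (x ^ n 0 * ∏ i : Fin N, (x + y i) ^ n i.succ) /
        (Nat.factorial ((∑ i, n i) + N) : ℂ))
      = ∑' n : Fin (N + 1) → ℕ,
        (∏ i, (x + (Fin.cons (0 : ℂ) y : Fin (N + 1) → ℂ) i) ^ n i) /
          ((Nat.factorial ((∑ i, n i) + N)) : ℂ) := by
    refine tsum_congr fun n => ?_
    congr 1
    rw [Fin.prod_univ_succ]
    simp
  have hR : (∑' n : Fin (N + 1) → ℕ,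
      (∏ i, (Fin.cons (0 : ℂ) y : Fin (N + 1) → ℂ) i ^ n i) /
        ((Nat.factorial ((∑ i, n i) + N)) : ℂ))
      = ∑' m : Fin N → ℕ,
        (∏ i : Fin N, y i ^ m i) / (Nat.factorial (∑ i, (m i + 1)) : ℂ) := by
    have hinj : Function.Injective (fun m : Fin N → ℕ => (Fin.cons 0 m : Fin (N + 1) → ℕ)) :=
      fun a b hab => Fin.cons_right_injective (α := fun _ : Fin (N + 1) => ℕ) 0 hab
    have hvanish : ∀ n : Fin (N + 1) → ℕ,
        n ∉ Set.range (fun m : Fin N → ℕ => Fin.cons 0 m) →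
        (∏ i, (Fin.cons (0 : ℂ) y : Fin (N + 1) → ℂ) i ^ n i) /
          ((Nat.factorial ((∑ i, n i) + N)) : ℂ) = 0 := by
      intro n hn
      have h0 : n 0 ≠ 0 := by
        intro h
        refine hn ⟨Fin.tail n, ?_⟩
        show (Fin.cons 0 (Fin.tail n) : Fin (N + 1) → ℕ) = n
        rw [← h]
        exact Fin.cons_self_tail n
      rw [Fin.prod_univ_succ]
      simp [zero_pow h0]
    rw [← Function.Injective.tsum_eq hinj (Function.support_subset_iff'.mpr hvanish)]
    refine tsum_congr fun m => ?_
    have hfac : (∑ i, (Fin.cons 0 m : Fin (N + 1) → ℕ) i) + N = ∑ i, (m i + 1) := by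
      rw [Fin.sum_univ_succ, Finset.sum_add_distrib]
      simp
    rw [hfac, Fin.prod_univ_succ]
    simp
  rw [hL, hkey, hR]
end

section
/- Let $C$ and $D$ be elements of a unital complex Banach algebra (or $n \times n$ complex matrices). Then for every natural number $N$, $\frac{1}{N!} \left.\left( \frac{d}{d\lambda} \right)^N e^{C + \lambda D}\right|_{\lambda = 0} = \sum_{n_0, \dots, n_N \geq 0} \frac{C^{n_0} D\, C^{n_1} D \cdots D\, C^{n_N}}{(n_0 + n_1 + \cdots + n_N + N)!}$, where the series on the right converges absolutely. -/
open NormedSpace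
open Finset Finset.Nat

namespace Stmt18Aux


/-! ### Algebraic part -/

section Alg
variable {A : Type*} [Semiring A] (C D : A)

/-- the word `C^{n₀} D C^{n₁} ⋯ D C^{n_N}` -/
def word (N : ℕ) (n : Fin (N+1) → ℕ) : A :=
  C ^ n 0 * (List.ofFn fun i : Fin N => D * C ^ n i.succ).prod

lemma word_cons_zero (N : ℕ) (t : Fin (N+1) → ℕ) :
    word C D (N+1) (Fin.cons 0 t) = D * word C D N t := by
  simp only [word, Fin.cons_zero, pow_zero, one_mul, Fin.cons_succ, List.ofFn_succ,
    List.prod_cons, Fin.succ_zero_eq_one, mul_assoc]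

lemma word_cons (N : ℕ) (a : ℕ) (t : Fin N → ℕ) :
    word C D N (Fin.cons a t) = C ^ a * (List.ofFn fun i : Fin N => D * C ^ t i).prod := by
  simp [word, Fin.cons_succ]

lemma word_cons_succ (N a : ℕ) (t : Fin N → ℕ) :
    word C D N (Fin.cons (a+1) t) = C * word C D N (Fin.cons a t) := by
  rw [word_cons, word_cons, pow_succ', mul_assoc]

lemma word_zero_tuple (N : ℕ) : word C D N 0 = D ^ N := by
  simp [word, List.ofFn_const]

lemma sum_adT_succ' {M : Type*} [AddCommMonoid M] (k m : ℕ) (f : (Fin (k+1) → ℕ) → M) :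
    ∑ n ∈ antidiagonalTuple (k+1) m, f n
      = ∑ p ∈ antidiagonal m, ∑ t ∈ antidiagonalTuple k p.2, f (Fin.cons p.1 t) := by
  rw [← Finset.sum_sigma (antidiagonal m) (fun p => antidiagonalTuple k p.2)
    (fun x => f (Fin.cons x.1.1 x.2))]
  refine Finset.sum_nbij' (i := fun n => ⟨(n 0, ∑ i, n (Fin.succ i)), Fin.tail n⟩)
    (j := fun x => Fin.cons x.1.1 x.2) ?_ ?_ ?_ ?_ ?_
  · intro n hn
    rw [mem_antidiagonalTuple] at hn
    simp only [Finset.mem_sigma, Finset.HasAntidiagonal.mem_antidiagonal, mem_antidiagonalTuple]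
    exact ⟨by rw [← hn, Fin.sum_univ_succ], rfl⟩
  · rintro ⟨⟨a, b⟩, t⟩ hx
    simp only [Finset.mem_sigma, Finset.HasAntidiagonal.mem_antidiagonal, mem_antidiagonalTuple] at hx
    rw [mem_antidiagonalTuple, Fin.sum_univ_succ]
    simp only [Fin.cons_zero, Fin.cons_succ]
    rw [hx.2, hx.1]
  · intro n _; exact Fin.cons_self_tail n
  · rintro ⟨⟨a, b⟩, t⟩ hx
    simp only [Finset.mem_sigma, Finset.HasAntidiagonal.mem_antidiagonal, mem_antidiagonalTuple] at hx
    simp [Fin.cons_zero, Fin.cons_succ, Fin.tail_cons, hx.2]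
  · intro n _
    simp [Fin.cons_self_tail]

/-- sum of all words with `N` letters `D` and `m` letters `C` -/
def U (N m : ℕ) : A := ∑ n ∈ antidiagonalTuple (N+1) m, word C D N n

lemma U_zero_left (m : ℕ) : U C D 0 m = C ^ m := by
  simp [U, antidiagonalTuple_one, word]

lemma U_zero_right (N : ℕ) : U C D N 0 = D ^ N := by
  simp [U, antidiagonalTuple_zero_right, word_zero_tuple]

lemma U_succ_succ (N m : ℕ) :
    U C D (N+1) (m+1) = C * U C D (N+1) m + D * U C D N (m+1) := by
  rw [U, sum_adT_succ', Nat.antidiagonal_succ, Finset.sum_cons]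
  simp only [Finset.sum_map, Function.Embedding.prodMap, Function.Embedding.coeFn_mk,
    Prod.map_fst, Prod.map_snd, Function.Embedding.refl_apply]
  rw [add_comm]
  congr 1
  · have : ∀ p ∈ antidiagonal m, ∑ t ∈ antidiagonalTuple (N+1) p.2,
        word C D (N+1) (Fin.cons (p.1.succ) t)
        = C * ∑ t ∈ antidiagonalTuple (N+1) p.2, word C D (N+1) (Fin.cons p.1 t) := by
      intro p _
      rw [Finset.mul_sum]
      exact Finset.sum_congr rfl fun t _ => word_cons_succ C D (N+1) p.1 t
    rw [Finset.sum_congr rfl this, ← Finset.mul_sum]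
    rw [show U C D (N+1) m = ∑ n ∈ antidiagonalTuple (N+2) m, word C D (N+1) n from rfl,
      sum_adT_succ']
  · rw [show U C D N (m+1) = ∑ n ∈ antidiagonalTuple (N+1) (m+1), word C D N n from rfl,
      Finset.mul_sum]
    exact (Finset.sum_congr rfl fun t _ => word_cons_zero C D N t)

end Alg

section Poly
variable {R A : Type*} [CommSemiring R] [Semiring A] [Algebra R A] (C D : A)

lemma pow_add_smul (k : ℕ) (z : R) :
    (C + z • D) ^ k = ∑ N ∈ Finset.range (k+1), z ^ N • U C D N (k - N) := by
  induction k with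
  | zero => simp [U_zero_left]
  | succ k ih =>
    rw [pow_succ', ih, add_mul, Finset.mul_sum, smul_mul_assoc, Finset.mul_sum]
    have hC : ∀ N ∈ Finset.range (k+1),
        C * z ^ N • U C D N (k - N) = z ^ N • (C * U C D N (k - N)) :=
      fun N _ => (mul_smul_comm _ _ _)
    have hD : ∀ N ∈ Finset.range (k+1),
        z • (D * z ^ N • U C D N (k - N)) = z ^ (N+1) • (D * U C D N (k - N)) := by
      intro N _
      rw [mul_smul_comm, smul_smul, ← pow_succ']
    rw [Finset.smul_sum, Finset.sum_congr rfl hC, Finset.sum_congr rfl hD]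
    rw [Finset.sum_range_succ' (fun N => z ^ N • U C D N (k + 1 - N)) (k+1)]
    rw [Finset.sum_range_succ (fun i => z ^ (i+1) • U C D (i+1) (k + 1 - (i+1))),
        Finset.sum_range_succ' (fun N => z ^ N • (C * U C D N (k - N))) k,
        Finset.sum_range_succ (fun N => z ^ (N+1) • (D * U C D N (k - N)))]
    have key : ∀ i ∈ Finset.range k,
        z ^ (i+1) • U C D (i+1) (k + 1 - (i+1))
          = z ^ (i+1) • (C * U C D (i+1) (k - (i+1))) + z ^ (i+1) • (D * U C D i (k - i)) := by
      intro i hi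
      rw [Finset.mem_range] at hi
      have h1 : k + 1 - (i+1) = (k - (i+1)) + 1 := by omega
      have h2 : k - i = (k - (i + 1)) + 1 := by omega
      rw [h1, U_succ_succ, smul_add, h2]
    rw [Finset.sum_congr rfl key, Finset.sum_add_distrib]
    simp only [Nat.add_sub_cancel, Nat.sub_self, Nat.sub_zero, pow_zero, one_smul]
    rw [U_zero_right, U_zero_right, ← pow_succ',
      show U C D 0 (k+1) = C * U C D 0 k by rw [U_zero_left, U_zero_left, pow_succ']]
    abel

end Poly

section Comm
variable {R : Type*} [CommSemiring R] (c d : R)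

lemma word_comm (N : ℕ) (n : Fin (N+1) → ℕ) :
    word c d N n = d ^ N * c ^ (∑ i, n i) := by
  rw [word, List.prod_ofFn, Finset.prod_mul_distrib, Finset.prod_const,
    Finset.prod_pow_eq_pow_sum, Fin.sum_univ_succ, pow_add]
  simp [Fintype.card_fin]
  ring

lemma U_comm (N m : ℕ) :
    U c d N m = (antidiagonalTuple (N+1) m).card • (d ^ N * c ^ m) := by
  rw [U, Finset.sum_congr rfl (fun n hn => ?_), Finset.sum_const]
  rw [mem_antidiagonalTuple] at hn
  rw [word_comm, hn]

lemma U_nonneg {c d : ℝ} (hc : 0 ≤ c) (hd : 0 ≤ d) (N m : ℕ) : 0 ≤ U c d N m := by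
  rw [U_comm]
  positivity

end Comm

/-! ### Norm estimates -/

section Norm
variable {B : Type*} [NormedRing B] (C D : B)

noncomputable def Ebnd (B : Type*) [NormedRing B] : ℝ := max ‖(1:B)‖ 1

lemma one_le_Ebnd (B : Type*) [NormedRing B] : (1:ℝ) ≤ Ebnd B := le_max_right _ _

lemma norm_one_le_Ebnd (B : Type*) [NormedRing B] : ‖(1:B)‖ ≤ Ebnd B := le_max_left _ _

lemma Ebnd_nonneg (B : Type*) [NormedRing B] : (0:ℝ) ≤ Ebnd B :=
  zero_le_one.trans (one_le_Ebnd B)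

lemma norm_pow_le_E (j : ℕ) : ‖C ^ j‖ ≤ Ebnd B * ‖C‖ ^ j := by
  cases j with
  | zero => simpa using norm_one_le_Ebnd B
  | succ j =>
    calc ‖C ^ (j+1)‖ ≤ ‖C‖ ^ (j+1) := norm_pow_le' C (Nat.succ_pos j)
      _ ≤ Ebnd B * ‖C‖ ^ (j+1) := le_mul_of_one_le_left (by positivity) (one_le_Ebnd B)

lemma norm_prod_ofFn_le : ∀ (N : ℕ) (n : Fin N → ℕ),
    ‖(List.ofFn fun i : Fin N => D * C ^ n i).prod‖
      ≤ Ebnd B * (Ebnd B * ‖D‖) ^ N * ‖C‖ ^ (∑ i, n i) := by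
  intro N
  induction N with
  | zero => intro n; simpa using norm_one_le_Ebnd B
  | succ N ih =>
    intro n
    rw [List.ofFn_succ, List.prod_cons]
    calc ‖D * C ^ n 0 * (List.ofFn fun i : Fin N => D * C ^ n i.succ).prod‖
        ≤ ‖D * C ^ n 0‖ * ‖(List.ofFn fun i : Fin N => D * C ^ n i.succ).prod‖ :=
          norm_mul_le _ _
      _ ≤ (‖D‖ * (Ebnd B * ‖C‖ ^ n 0)) *
            (Ebnd B * (Ebnd B * ‖D‖) ^ N * ‖C‖ ^ (∑ i : Fin N, n i.succ)) := by
          apply mul_le_mul ((norm_mul_le _ _).trans ?_) (ih _) (norm_nonneg _)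
            (mul_nonneg (norm_nonneg _) (mul_nonneg (Ebnd_nonneg B) (by positivity)))
          exact mul_le_mul_of_nonneg_left (norm_pow_le_E C _) (norm_nonneg _)
      _ = Ebnd B * (Ebnd B * ‖D‖) ^ (N+1) * ‖C‖ ^ (∑ i, n i) := by
          rw [Fin.sum_univ_succ, pow_add, pow_succ]
          ring

lemma norm_word_le (N : ℕ) (n : Fin (N+1) → ℕ) :
    ‖word C D N n‖ ≤ (Ebnd B)^2 * (Ebnd B * ‖D‖) ^ N * ‖C‖ ^ (∑ i, n i) := by
  calc ‖word C D N n‖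
      ≤ ‖C ^ n 0‖ * ‖(List.ofFn fun i : Fin N => D * C ^ n i.succ).prod‖ := norm_mul_le _ _
    _ ≤ (Ebnd B * ‖C‖ ^ n 0) * (Ebnd B * (Ebnd B * ‖D‖) ^ N * ‖C‖ ^ (∑ i : Fin N, n i.succ)) :=
        mul_le_mul (norm_pow_le_E C _) (norm_prod_ofFn_le C D N _) (norm_nonneg _)
          (mul_nonneg (Ebnd_nonneg B) (by positivity))
    _ = (Ebnd B)^2 * (Ebnd B * ‖D‖) ^ N * ‖C‖ ^ (∑ i, n i) := by
        rw [Fin.sum_univ_succ, pow_add]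
        ring

lemma norm_U_le (N m : ℕ) :
    ‖U C D N m‖ ≤ (Ebnd B)^2 * U ‖C‖ (Ebnd B * ‖D‖) N m := by
  rw [U_comm]
  calc ‖U C D N m‖ ≤ ∑ n ∈ antidiagonalTuple (N+1) m, ‖word C D N n‖ := norm_sum_le _ _
    _ ≤ ∑ n ∈ antidiagonalTuple (N+1) m,
          (Ebnd B)^2 * ((Ebnd B * ‖D‖) ^ N * ‖C‖ ^ m) := by
        refine Finset.sum_le_sum fun n hn => ?_
        rw [mem_antidiagonalTuple] at hn
        rw [← mul_assoc]
        rw [← hn]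
        exact norm_word_le C D N n
    _ = (Ebnd B)^2 * ((antidiagonalTuple (N+1) m).card • ((Ebnd B * ‖D‖) ^ N * ‖C‖ ^ m)) := by
        rw [Finset.sum_const, nsmul_eq_mul, nsmul_eq_mul]
        ring

end Norm


/-! ### Analytic part -/

section Analytic
variable {𝔸 : Type*} [NormedRing 𝔸] [NormedAlgebra ℂ 𝔸] [CompleteSpace 𝔸] (C D : 𝔸)

/-- real comparison family -/
noncomputable def hK (C D : 𝔸) (t : ℝ) (p : ℕ × ℕ) : ℝ :=
  (Ebnd 𝔸)^2 * ((((p.2 + p.1).factorial : ℝ))⁻¹ * t ^ p.1 * U ‖C‖ (Ebnd 𝔸 * ‖D‖) p.1 p.2)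

lemma hK_nonneg (t : ℝ) (ht : 0 ≤ t) : 0 ≤ hK C D t := by
  intro p
  refine mul_nonneg (by positivity) (mul_nonneg (mul_nonneg (by positivity) (pow_nonneg ht _))
    (U_nonneg (norm_nonneg _) (mul_nonneg (Ebnd_nonneg _) (norm_nonneg _)) _ _))

lemma summable_real_aux (c d t : ℝ) (hc : 0 ≤ c) (hd : 0 ≤ d) (ht : 0 ≤ t) :
    Summable (fun p : ℕ × ℕ => (((p.2 + p.1).factorial : ℝ))⁻¹ * t ^ p.1 * U c d p.1 p.2) := by
  have hnn : ∀ p : ℕ × ℕ, 0 ≤ (((p.2 + p.1).factorial : ℝ))⁻¹ * t ^ p.1 * U c d p.1 p.2 :=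
    fun p => mul_nonneg (mul_nonneg (by positivity) (pow_nonneg ht _)) (U_nonneg hc hd _ _)
  rw [← Equiv.summable_iff (Finset.HasAntidiagonal.sigmaAntidiagonalEquivProd (A := ℕ))]
  refine (summable_sigma_of_nonneg (fun x => hnn _)).2 ⟨fun k => Summable.of_finite, ?_⟩
  have key : ∀ k : ℕ, (∑' (p : (antidiagonal k : Finset (ℕ × ℕ))),
      ((((p : ℕ × ℕ).2 + (p : ℕ × ℕ).1).factorial : ℝ))⁻¹ * t ^ (p : ℕ × ℕ).1
        * U c d (p : ℕ × ℕ).1 (p : ℕ × ℕ).2)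
      = ((k.factorial : ℝ))⁻¹ * (c + t • d) ^ k := by
    intro k
    refine (Finset.tsum_subtype (antidiagonal k)
      (fun q : ℕ × ℕ => ((q.2 + q.1).factorial : ℝ)⁻¹ * t ^ q.1 * U c d q.1 q.2)).trans ?_
    rw [Finset.Nat.sum_antidiagonal_eq_sum_range_succ_mk,
      pow_add_smul c d k t, Finset.mul_sum]
    refine Finset.sum_congr rfl fun N hN => ?_
    rw [Finset.mem_range] at hN
    rw [Nat.sub_add_cancel (by omega), smul_eq_mul]
    ring
  refine Summable.congr (f := fun k : ℕ => ((k.factorial : ℝ))⁻¹ * (c + t • d) ^ k) ?_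
    (fun k => (key k).symm)
  refine (Real.summable_pow_div_factorial (c + t • d)).congr fun k => ?_
  rw [div_eq_inv_mul]

lemma summable_hK (t : ℝ) (ht : 0 ≤ t) : Summable (hK C D t) :=
  ((summable_real_aux ‖C‖ (Ebnd 𝔸 * ‖D‖) t (norm_nonneg C)
    (mul_nonneg (Ebnd_nonneg _) (norm_nonneg D)) ht).mul_left _)

noncomputable def G (z : ℂ) (p : ℕ × ℕ) : 𝔸 :=
  (((p.2 + p.1).factorial : ℂ))⁻¹ • z ^ p.1 • U C D p.1 p.2

lemma norm_G_le (z : ℂ) (p : ℕ × ℕ) : ‖G C D z p‖ ≤ hK C D ‖z‖ p := by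
  rw [G, norm_smul, norm_smul, norm_inv, norm_pow]
  simp only [Complex.norm_natCast]
  calc (((p.2 + p.1).factorial : ℝ))⁻¹ * (‖z‖ ^ p.1 * ‖U C D p.1 p.2‖)
      ≤ (((p.2 + p.1).factorial : ℝ))⁻¹
          * (‖z‖ ^ p.1 * ((Ebnd 𝔸)^2 * U ‖C‖ (Ebnd 𝔸 * ‖D‖) p.1 p.2)) := by
        gcongr
        exact norm_U_le C D p.1 p.2
    _ = hK C D ‖z‖ p := by rw [hK]; ring

lemma summable_G (z : ℂ) : Summable (G C D z) :=
  Summable.of_norm (Summable.of_nonneg_of_le (fun _ => norm_nonneg _)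
    (norm_G_le C D z) (summable_hK C D ‖z‖ (norm_nonneg z)))

lemma tsum_G (z : ℂ) : ∑' p, G C D z p = exp (C + z • D) := by
  rw [← Equiv.tsum_eq Finset.HasAntidiagonal.sigmaAntidiagonalEquivProd (G C D z)]
  have hsig : Summable fun x : Σ k : ℕ, (antidiagonal k : Finset (ℕ × ℕ)) =>
      G C D z (Finset.HasAntidiagonal.sigmaAntidiagonalEquivProd x) :=
    (Equiv.summable_iff (Finset.HasAntidiagonal.sigmaAntidiagonalEquivProd (A := ℕ))
      (f := G C D z)).2 (summable_G C D z)
  rw [Summable.tsum_sigma hsig]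
  have fib : ∀ k : ℕ, (∑' (p : (antidiagonal k : Finset (ℕ × ℕ))),
      G C D z (Finset.HasAntidiagonal.sigmaAntidiagonalEquivProd ⟨k, p⟩))
      = ((k.factorial : ℂ))⁻¹ • (C + z • D) ^ k := by
    intro k
    have : ∀ p : (antidiagonal k : Finset (ℕ × ℕ)),
        G C D z (Finset.HasAntidiagonal.sigmaAntidiagonalEquivProd ⟨k, p⟩) = G C D z (p : ℕ × ℕ) := by
      intro p; rfl
    rw [tsum_congr this]
    refine (Finset.tsum_subtype (antidiagonal k) (G C D z)).trans ?_
    rw [Finset.Nat.sum_antidiagonal_eq_sum_range_succ_mk,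
      pow_add_smul C D k z, Finset.smul_sum]
    refine Finset.sum_congr rfl fun N hN => ?_
    rw [Finset.mem_range] at hN
    rw [G]
    simp only
    rw [Nat.sub_add_cancel (by omega)]
  rw [tsum_congr fib, exp_eq_tsum (𝕂 := ℂ)]

lemma hasSum_G (z : ℂ) : HasSum (G C D z) (exp (C + z • D)) := by
  have h := (summable_G C D z).hasSum
  rwa [tsum_G] at h

noncomputable def AA (N : ℕ) : 𝔸 := ∑' m : ℕ, (((m + N).factorial : ℂ))⁻¹ • U C D N m

lemma summable_AA (N : ℕ) :
    Summable (fun m : ℕ => (((m + N).factorial : ℂ))⁻¹ • U C D N m) := by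
  have h := (summable_G C D 1).prod_factor N
  simpa [G] using h

lemma hasSum_coeff (z : ℂ) :
    HasSum (fun N : ℕ => z ^ N • AA C D N) (exp (C + z • D)) := by
  refine (hasSum_G C D z).prod_fiberwise fun N => ?_
  have h := (summable_AA C D N).hasSum.const_smul (z ^ N)
  have heq : (fun m : ℕ => z ^ N • (((m + N).factorial : ℂ))⁻¹ • U C D N m)
      = fun m : ℕ => G C D z (N, m) := by
    funext m
    rw [G, smul_comm]
  rwa [heq] at h



lemma summable_norm_AA : Summable (fun N : ℕ => ‖AA C D N‖) := by
  have h1 := summable_hK C D 1 zero_le_one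
  have hnn := hK_nonneg C D 1 zero_le_one
  obtain ⟨hfib, hsums⟩ := (summable_prod_of_nonneg hnn).1 h1
  refine Summable.of_nonneg_of_le (fun _ => norm_nonneg _) (fun N => ?_) hsums
  have hterm : ∀ m : ℕ, ‖(((m + N).factorial : ℂ))⁻¹ • U C D N m‖ ≤ hK C D 1 (N, m) := by
    intro m
    have h := norm_G_le C D 1 (N, m)
    simpa [G] using h
  have hS : Summable (fun m : ℕ => ‖(((m + N).factorial : ℂ))⁻¹ • U C D N m‖) :=
    Summable.of_nonneg_of_le (fun _ => norm_nonneg _) hterm (hfib N)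
  calc ‖AA C D N‖ ≤ ∑' m : ℕ, ‖(((m + N).factorial : ℂ))⁻¹ • U C D N m‖ :=
        norm_tsum_le_tsum_norm hS
    _ ≤ ∑' m : ℕ, hK C D 1 (N, m) := Summable.tsum_le_tsum hterm hS (hfib N)

noncomputable def pSer : FormalMultilinearSeries ℂ ℂ 𝔸 := fun N =>
  ContinuousMultilinearMap.mkPiRing ℂ (Fin N) (AA C D N)

lemma hasFPS : HasFPowerSeriesOnBall (fun lam : ℂ => exp (C + lam • D)) (pSer C D) 0 1 where
  r_le := by
    have h : Summable (fun n : ℕ => ‖pSer C D n‖ * ((1 : NNReal) : ℝ) ^ n) := by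
      refine (summable_norm_AA C D).congr fun n => ?_
      simp [pSer, ContinuousMultilinearMap.norm_mkPiRing]
    exact le_of_eq_of_le (by simp) ((pSer C D).le_radius_of_summable h)
  r_pos := one_pos
  hasSum := by
    intro y _
    have h := hasSum_coeff C D y
    simp only [zero_add]
    refine h.congr_fun fun N => ?_
    simp [pSer, ContinuousMultilinearMap.mkPiRing_apply]

lemma tsum_group (N : ℕ) :
    (∑' n : Fin (N + 1) → ℕ, ((Nat.factorial ((∑ i, n i) + N) : ℂ))⁻¹ • word C D N n)
      = AA C D N := by
  classical
  set F : (Fin (N+1) → ℕ) → 𝔸 :=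
    fun n => ((Nat.factorial ((∑ i, n i) + N) : ℂ))⁻¹ • word C D N n with hF
  have h1 := summable_hK C D 1 zero_le_one
  have hfibK : ∀ m : ℕ, Summable (fun q : ℕ => hK C D 1 (N, q)) := fun _ =>
    h1.prod_factor N
  have hfibsum : ∀ m : ℕ, ∑ n ∈ antidiagonalTuple (N+1) m, F n
      = (((m + N).factorial : ℂ))⁻¹ • U C D N m := by
    intro m
    rw [U, Finset.smul_sum]
    refine Finset.sum_congr rfl fun n hn => ?_
    rw [mem_antidiagonalTuple] at hn
    simp only [hF, hn]
  have hnormfib : ∀ m : ℕ, ∑ n ∈ antidiagonalTuple (N+1) m, ‖F n‖ ≤ hK C D 1 (N, m) := by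
    intro m
    calc ∑ n ∈ antidiagonalTuple (N+1) m, ‖F n‖
        ≤ ∑ n ∈ antidiagonalTuple (N+1) m,
            (((m + N).factorial : ℝ))⁻¹ * ((Ebnd 𝔸)^2 * ((Ebnd 𝔸 * ‖D‖) ^ N * ‖C‖ ^ m)) := by
          refine Finset.sum_le_sum fun n hn => ?_
          rw [mem_antidiagonalTuple] at hn
          rw [hF]
          simp only
          rw [norm_smul, norm_inv]
          simp only [Complex.norm_natCast]
          rw [hn]
          refine mul_le_mul_of_nonneg_left ?_ (by positivity)
          have := norm_word_le C D N n
          rw [hn] at this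
          calc ‖word C D N n‖ ≤ (Ebnd 𝔸)^2 * (Ebnd 𝔸 * ‖D‖) ^ N * ‖C‖ ^ m := this
            _ = (Ebnd 𝔸)^2 * ((Ebnd 𝔸 * ‖D‖) ^ N * ‖C‖ ^ m) := by ring
      _ = hK C D 1 (N, m) := by
          rw [Finset.sum_const, hK, U_comm, nsmul_eq_mul, nsmul_eq_mul]
          push_cast
          ring
  have hnn : ∀ x : Σ m : ℕ, (antidiagonalTuple (N+1) m : Finset (Fin (N+1) → ℕ)),
      (0:ℝ) ≤ ‖F ((x.2 : Fin (N+1) → ℕ))‖ := fun _ => norm_nonneg _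
  have hnorm_sig : Summable fun x : Σ m : ℕ, (antidiagonalTuple (N+1) m : Finset (Fin (N+1) → ℕ))
      => ‖F ((x.2 : Fin (N+1) → ℕ))‖ := by
    refine (summable_sigma_of_nonneg hnn).2 ⟨fun m => Summable.of_finite, ?_⟩
    refine Summable.of_nonneg_of_le (fun m => tsum_nonneg fun _ => norm_nonneg _)
      (fun m => ?_) (hfibK 0)
    refine le_of_eq_of_le (Finset.tsum_subtype (antidiagonalTuple (N+1) m)
      (fun n => ‖F n‖)) (hnormfib m)
  have hsig : Summable fun x : Σ m : ℕ, (antidiagonalTuple (N+1) m : Finset (Fin (N+1) → ℕ))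
      => F ((x.2 : Fin (N+1) → ℕ)) := Summable.of_norm hnorm_sig
  have hsumF : Summable F :=
    (Equiv.summable_iff (Finset.Nat.sigmaAntidiagonalTupleEquivTuple (N+1)) (f := F)).1 hsig
  calc ∑' n, F n
      = ∑' x : Σ m : ℕ, (antidiagonalTuple (N+1) m : Finset (Fin (N+1) → ℕ)),
          F (Finset.Nat.sigmaAntidiagonalTupleEquivTuple (N+1) x) :=
        (Equiv.tsum_eq (Finset.Nat.sigmaAntidiagonalTupleEquivTuple (N+1)) F).symm
    _ = ∑' m : ℕ, ∑' n : (antidiagonalTuple (N+1) m : Finset (Fin (N+1) → ℕ)),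
          F ((n : Fin (N+1) → ℕ)) := Summable.tsum_sigma hsig
    _ = ∑' m : ℕ, (((m + N).factorial : ℂ))⁻¹ • U C D N m := by
        refine tsum_congr fun m => ?_
        refine (Finset.tsum_subtype (antidiagonalTuple (N+1) m) F).trans (hfibsum m)
    _ = AA C D N := rfl

end Analytic
end Stmt18Aux

/-- Expansion of the perturbed exponential:
`(1/N!) (d/dλ)^N e^{C+λD} |_{λ=0}
  = ∑_{n₀,…,n_N} C^{n₀} D C^{n₁} ⋯ D C^{n_N} / (n₀+⋯+n_N+N)!`. -/
theorem stmt18 {𝔸 : Type*} [NormedRing 𝔸] [NormedAlgebra ℂ 𝔸] [CompleteSpace 𝔸]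
    (C D : 𝔸) (N : ℕ) :
    ((Nat.factorial N : ℂ))⁻¹ •
        iteratedDeriv N (fun lam : ℂ => exp (C + lam • D)) 0 =
      ∑' n : Fin (N + 1) → ℕ,
        ((Nat.factorial ((∑ i, n i) + N) : ℂ))⁻¹ •
          (C ^ n 0 * (List.ofFn fun i : Fin N => D * C ^ n i.succ).prod) := by
  have hfps := Stmt18Aux.hasFPS C D
  have h1 : iteratedDeriv N (fun lam : ℂ => exp (C + lam • D)) 0
      = N.factorial • Stmt18Aux.AA C D N := by
    rw [iteratedDeriv_eq_iteratedFDeriv, ← hfps.factorial_smul (1:ℂ) N]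
    congr 1
    simp [Stmt18Aux.pSer, ContinuousMultilinearMap.mkPiRing_apply]
  rw [h1, ← Nat.cast_smul_eq_nsmul ℂ, smul_smul,
    inv_mul_cancel₀ (by exact_mod_cast N.factorial_ne_zero), one_smul]
  exact (Stmt18Aux.tsum_group C D N).symm
end
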